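/- arXiv:1805.05637 — 3 statements merged into one kernel-verified Lean document; each statement's English description precedes it below -/
import Mathlib

section
/- Let G be a countable directed graph which is cofinal and whose set NW_G of non-wandering vertices is non-empty. Then NW_G is a hereditary subset of G_V: for every arrow a with s(a) ∈ NW_G one has r(a) ∈ NW_G. -/
open MeasureTheory
open scoped ENNReal

/-- A countable directed graph: countable sets of vertices and arrows together with
source and range maps. -/
structure CDG where
  V : Type
  A : Type
  countV : Countable V
  countA : Countable A
  src : A → V
  rng : A → V

attribute [instance] CDG.countV CDG.countA

namespace CDG

/-- The space `P(G)` of infinite paths in `G`. -/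
abbrev PathSpace (G : CDG) : Type :=
  {p : ℕ → G.A // ∀ i : ℕ, G.rng (p i) = G.src (p (i + 1))}

/-- The source vertex of an infinite path. -/
def isrc {G : CDG} (p : G.PathSpace) : G.V := G.src (p.1 0)

/-- The shift map `σ` on `P(G)`. -/
def shift {G : CDG} (p : G.PathSpace) : G.PathSpace :=
  ⟨fun i => p.1 (i + 1), fun i => p.2 (i + 1)⟩

/-- A countable set carries the discrete (Borel) σ-algebra. -/
instance (G : CDG) : MeasurableSpace G.A := ⊤

/-- A finite path in `G`: a base vertex together with a (possibly empty) string of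
composable arrows starting at the base vertex.  A finite path with no arrows is a vertex. -/
structure FinPath (G : CDG) where
  base : G.V
  arrows : List G.A
  head_src : ∀ a ∈ arrows.head?, G.src a = base
  chain : arrows.Chain' fun a b => G.rng a = G.src b

namespace FinPath

variable {G : CDG}

/-- The length `|μ|` of a finite path. -/
def length (μ : FinPath G) : ℕ := μ.arrows.length

/-- The source `s(μ)` of a finite path. -/
def fsrc (μ : FinPath G) : G.V := μ.base

/-- The range `r(μ)` of a finite path. -/
def frng (μ : FinPath G) : G.V := μ.arrows.getLast?.elim μ.base G.rng

/-- A vertex, regarded as a finite path of length `0`. -/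
def ofVertex (G : CDG) (v : G.V) : FinPath G :=
  ⟨v, [], by intro a ha; simp at ha, List.isChain_nil⟩

/-- Concatenation `μδ` of composable finite paths. -/
def concat (μ δ : FinPath G) (h : δ.base = μ.frng) : FinPath G where
  base := μ.base
  arrows := μ.arrows ++ δ.arrows
  head_src := by
    intro a ha
    cases hμ : μ.arrows with
    | nil =>
        rw [hμ] at ha
        simp only [List.nil_append] at ha
        have h1 : G.src a = δ.base := δ.head_src a ha
        have h2 : μ.frng = μ.base := by simp [FinPath.frng, hμ]
        rw [h1, h, h2]
    | cons b l =>
        rw [hμ] at ha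
        simp only [List.cons_append, List.head?_cons, Option.mem_def,
          Option.some.injEq] at ha
        cases ha
        exact μ.head_src _ (by rw [hμ]; rfl)
  chain := by
    refine List.IsChain.append μ.chain δ.chain ?_
    intro x hx y hy
    rw [Option.mem_def] at hx
    have h1 : μ.frng = G.rng x := by simp [FinPath.frng, hx]
    have h2 : G.src y = δ.base := δ.head_src y hy
    rw [h2, h, h1]

end FinPath

/-- The extension of a potential `F : G_Ar → ℝ` to finite paths:
`F(μ) = Σ_{i} F(a_i)`, with `F(v) = 0` for vertices. -/
def pot {G : CDG} (F : G.A → ℝ) (μ : FinPath G) : ℝ := (μ.arrows.map F).sum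

/-- The cylinder set `Z(μ)` of a finite path `μ`. -/
def cyl {G : CDG} (μ : FinPath G) : Set G.PathSpace :=
  {p | G.src (p.1 0) = μ.base ∧
    ∀ (i : ℕ) (h : i < μ.arrows.length), p.1 i = μ.arrows.get ⟨i, h⟩}

/-- The cylinder set `Z(v)` of a vertex `v`. -/
def cylV (G : CDG) (v : G.V) : Set G.PathSpace := {p | G.src (p.1 0) = v}

/-- An `e^{βF}`-conformal measure on `P(G)`: a non-zero Borel measure giving finite
measure to each `Z(v)` and satisfying `m(σ(B ∩ Z(a))) = e^{βF(a)} m(B ∩ Z(a))`. -/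
structure IsConformal (G : CDG) (F : G.A → ℝ) (β : ℝ)
    (m : Measure G.PathSpace) : Prop where
  ne_zero : m ≠ 0
  vert_fin : ∀ v : G.V, m (cylV G v) < ⊤
  conformal : ∀ (a : G.A) (B : Set G.PathSpace), MeasurableSet B →
      m (shift '' (B ∩ {p : G.PathSpace | p.1 0 = a})) =
        ENNReal.ofReal (Real.exp (β * F a)) * m (B ∩ {p : G.PathSpace | p.1 0 = a})

/-- The set `NW_G` of non-wandering vertices: those supporting a loop. -/
def NW (G : CDG) : Set G.V :=
  {v | ∃ μ : FinPath G, 0 < μ.length ∧ μ.fsrc = v ∧ μ.frng = v}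

/-- The set `V_∞` of sinks and infinite emitters. -/
def Vinf (G : CDG) : Set G.V :=
  {v | (∀ a : G.A, G.src a ≠ v) ∨ {a : G.A | G.src a = v}.Infinite}

/-- A hereditary subset of vertices. -/
def Hereditary (G : CDG) (H : Set G.V) : Prop :=
  ∀ a : G.A, G.src a ∈ H → G.rng a ∈ H

/-- A saturated subset of vertices. -/
def Saturated (G : CDG) (H : Set G.V) : Prop :=
  ∀ v : G.V, v ∉ Vinf G → (∀ a : G.A, G.src a = v → G.rng a ∈ H) → v ∈ H

/-- `G` is cofinal when the only non-empty hereditary and saturated subset of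
vertices is the set of all vertices. -/
def Cofinal (G : CDG) : Prop :=
  ∀ H : Set G.V, H.Nonempty → Hereditary G H → Saturated G H → H = Set.univ

/-- `P(G)_rec`: the paths passing through every arrow of `NW_Ar` infinitely often. -/
def recSet (G : CDG) : Set G.PathSpace :=
  {p | ∀ a : G.A, G.src a ∈ NW G → ∀ n : ℕ, ∃ i ≥ n, p.1 i = a}

/-- `P(G)_wan`: the paths visiting every vertex at most finitely many times. -/
def wanSet (G : CDG) : Set G.PathSpace :=
  {p | ∀ v : G.V, {i : ℕ | G.src (p.1 i) = v}.Finite}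

/-- The matrix entry `A(β)^n_{v,w} = Σ_μ e^{-βF(μ)} ∈ [0,∞]`, summing over finite
paths `μ` of length `n` with `s(μ) = v` and `r(μ) = w`. -/
noncomputable def Apow (G : CDG) (F : G.A → ℝ) (β : ℝ) (n : ℕ) (v w : G.V) : ℝ≥0∞ :=
  ∑' μ : {μ : FinPath G // μ.length = n ∧ μ.fsrc = v ∧ μ.frng = w},
    ENNReal.ofReal (Real.exp (-(β * pot F μ.1)))

/-- An `A(β)`-harmonic vector: non-zero, finite, non-negative, and harmonic at
every vertex. -/
def IsHarmonicVec (G : CDG) (F : G.A → ℝ) (β : ℝ) (ψ : G.V → ℝ≥0∞) : Prop :=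
  ψ ≠ 0 ∧ (∀ v : G.V, ψ v ≠ ⊤) ∧
    ∀ v : G.V, ψ v =
      ∑' a : {a : G.A // G.src a = v},
        ENNReal.ofReal (Real.exp (-(β * F a.1))) * ψ (G.rng a.1)

end CDG

namespace CDG
namespace FinPath

variable {G : CDG}

/-- A single arrow as a finite path. -/
def single (a : G.A) : FinPath G :=
  ⟨G.src a, [a], by intro x hx; simp at hx; rw [hx], List.isChain_singleton a⟩

@[simp] lemma single_fsrc (a : G.A) : (single a).fsrc = G.src a := rfl
@[simp] lemma single_frng (a : G.A) : (single a).frng = G.rng a := by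
  simp [single, frng]
@[simp] lemma single_length (a : G.A) : (single a).length = 1 := rfl

lemma concat_fsrc (μ δ : FinPath G) (h : δ.base = μ.frng) :
    (μ.concat δ h).fsrc = μ.fsrc := rfl

lemma concat_frng (μ δ : FinPath G) (h : δ.base = μ.frng) :
    (μ.concat δ h).frng = δ.frng := by
  show (μ.arrows ++ δ.arrows).getLast?.elim μ.base G.rng
      = δ.arrows.getLast?.elim δ.base G.rng
  cases δ.arrows with
  | nil =>
      simp only [List.append_nil, List.getLast?_nil, Option.elim]
      exact (h.symm : μ.arrows.getLast?.elim μ.base G.rng = δ.base).symm ▸ rfl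
  | cons c m =>
      rw [List.getLast?_append, List.getLast?_eq_getLast (l := c :: m) (by simp)]
      rfl

/-- The tail of a finite path whose arrow list is `b :: l`. -/
def tail (μ : FinPath G) (b : G.A) (l : List G.A) (hμ : μ.arrows = b :: l) :
    FinPath G :=
  ⟨G.rng b, l, by
      intro x hx
      have hc := μ.chain
      rw [hμ] at hc
      replace hc := List.isChain_cons.mp hc
      exact (hc.1 x hx).symm,
    by
      have hc := μ.chain
      rw [hμ] at hc
      replace hc := List.isChain_cons.mp hc
      exact hc.2⟩

lemma tail_frng (μ : FinPath G) (b : G.A) (l : List G.A) (hμ : μ.arrows = b :: l) :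
    (μ.tail b l hμ).frng = μ.frng := by
  show l.getLast?.elim (G.rng b) G.rng = μ.arrows.getLast?.elim μ.base G.rng
  rw [hμ]
  cases l with
  | nil => simp
  | cons c m =>
      show (c :: m).getLast?.elim _ G.rng = (b :: c :: m).getLast?.elim _ G.rng
      rw [List.getLast?_cons_cons, List.getLast?_eq_getLast (l := c :: m) (by simp)]
      rfl

end FinPath

variable {G : CDG}

/-- `u` reaches `v`. -/
def Reaches (G : CDG) (u v : G.V) : Prop :=
  ∃ μ : FinPath G, μ.fsrc = u ∧ μ.frng = v

lemma reaches_refl (v : G.V) : Reaches G v v :=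
  ⟨FinPath.ofVertex G v, rfl, by simp [FinPath.frng, FinPath.ofVertex]⟩

lemma reaches_of_arrow (a : G.A) {v : G.V} (h : Reaches G (G.rng a) v) :
    Reaches G (G.src a) v := by
  obtain ⟨δ, hs, hr⟩ := h
  have hb : δ.base = (FinPath.single a).frng := by
    rw [FinPath.single_frng]; exact hs
  exact ⟨(FinPath.single a).concat δ hb, rfl,
    by rw [FinPath.concat_frng]; exact hr⟩

end CDG

open CDG in
/-- for a cofinal graph with `NW_G ≠ ∅`, the set `NW_G` of non-wandering
vertices is hereditary. -/
theorem stmt3 (G : CDG) (hcof : Cofinal G) (hne : (NW G).Nonempty) :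
    Hereditary G (NW G) := by
  intro a hsrc
  by_contra hw
  set v := G.src a with hv
  set H : Set G.V := {u | ¬ Reaches G u v} with hH
  -- hereditary
  have hHer : Hereditary G H := by
    intro b hb hr
    exact hb (reaches_of_arrow b hr)
  -- saturated
  have hSat : Saturated G H := by
    intro u _ hall hu
    obtain ⟨μ, hs, hr⟩ := hu
    cases hμ : μ.arrows with
    | nil =>
        -- u = v, and v carries a loop
        have huv : u = v := by
          have : μ.frng = μ.base := by simp [FinPath.frng, hμ]
          rw [← hs, ← hr, this]; rfl
        obtain ⟨lp, hlen, hls, hlr⟩ := hsrc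
        cases hlp : lp.arrows with
        | nil => simp [FinPath.length, hlp] at hlen
        | cons b l =>
            have hsb : G.src b = u := by
              rw [lp.head_src b (by rw [hlp]; rfl),
                show lp.base = v from hls, ← huv]
            apply hall b hsb
            exact ⟨lp.tail b l hlp, rfl, by rw [FinPath.tail_frng]; exact hlr⟩
    | cons b l =>
        have hsb : G.src b = u := by
          have := μ.head_src b (by rw [hμ]; rfl)
          rw [this, ← hs]; rfl
        apply hall b hsb
        exact ⟨μ.tail b l hμ, rfl, by rw [FinPath.tail_frng]; exact hr⟩
  -- nonempty: r a ∈ H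
  have hwH : G.rng a ∈ H := by
    intro hreach
    apply hw
    obtain ⟨δ, hs, hr⟩ := hreach
    have hb : (FinPath.single a).base = δ.frng := by rw [hr]; rfl
    refine ⟨δ.concat (FinPath.single a) hb, ?_, ?_, ?_⟩
    · simp [FinPath.length, FinPath.concat, FinPath.single]
    · exact hs
    · rw [FinPath.concat_frng, FinPath.single_frng]
  have := hcof H ⟨_, hwH⟩ hHer hSat
  have hvH : v ∈ H := this ▸ Set.mem_univ v
  exact hvH (reaches_refl v)
end

section
/- Let G be a countable directed graph which is cofinal and whose set NW_G of non-wandering vertices is non-empty. Then NW_G, together with the arrows NW_Ar = {a ∈ G_Ar : s(a) ∈ NW_G}, is a strongly connected subgraph of G: for every pair of vertices v, w ∈ NW_G there is a finite path of positive length from v to w all of whose arrows lie in NW_Ar. -/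
open MeasureTheory
open scoped ENNReal

namespace CDG

variable {G : CDG}

/-- Plain reachability by a finite path (length ≥ 0). -/
def Reach (G : CDG) (x y : G.V) : Prop :=
  ∃ μ : FinPath G, μ.fsrc = x ∧ μ.frng = y

/-- Helper: range of a string of arrows with given base. -/
def fr (G : CDG) (b : G.V) (l : List G.A) : G.V := l.getLast?.elim b G.rng

lemma frng_eq_fr (μ : FinPath G) : μ.frng = fr G μ.base μ.arrows := rfl

lemma fr_cons (b : G.V) (c : G.A) (l : List G.A) :
    fr G b (c :: l) = fr G (G.rng c) l := by
  cases l with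
  | nil => rfl
  | cons d l =>
      show (c :: d :: l).getLast?.elim b G.rng = (d :: l).getLast?.elim (G.rng c) G.rng
      rw [List.getLast?_cons_cons]
      rcases hx : (d :: l).getLast? with _ | e
      · simp at hx
      · rfl

lemma fr_append (b : G.V) (l₁ l₂ : List G.A) :
    fr G b (l₁ ++ l₂) = fr G (fr G b l₁) l₂ := by
  induction l₁ generalizing b with
  | nil => rfl
  | cons c l ih => rw [List.cons_append, fr_cons, fr_cons, ih]

lemma frng_concat (μ δ : FinPath G) (h : δ.base = μ.frng) :
    (μ.concat δ h).frng = δ.frng := by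
  rw [frng_eq_fr, frng_eq_fr]
  show fr G μ.base (μ.arrows ++ δ.arrows) = fr G δ.base δ.arrows
  rw [fr_append, h, frng_eq_fr]

lemma length_concat (μ δ : FinPath G) (h : δ.base = μ.frng) :
    (μ.concat δ h).length = μ.length + δ.length :=
  List.length_append

lemma reach_refl (x : G.V) : Reach G x x := ⟨FinPath.ofVertex G x, rfl, rfl⟩

lemma reach_trans {x y z : G.V} (h1 : Reach G x y) (h2 : Reach G y z) :
    Reach G x z := by
  obtain ⟨μ, hμs, hμr⟩ := h1
  obtain ⟨δ, hδs, hδr⟩ := h2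
  have hb : δ.base = μ.frng := by rw [hμr, ← hδs]; rfl
  exact ⟨μ.concat δ hb, hμs, by rw [frng_concat]; exact hδr⟩

/-- A single arrow as a finite path. -/
def single (a : G.A) : FinPath G :=
  ⟨G.src a, [a], by intro b hb; simp at hb; rw [hb], List.isChain_singleton a⟩

lemma single_fsrc (a : G.A) : (single a).fsrc = G.src a := rfl
lemma single_frng (a : G.A) : (single a).frng = G.rng a := rfl

lemma reach_arrow (a : G.A) : Reach G (G.src a) (G.rng a) :=
  ⟨single a, rfl, rfl⟩

/-- Every vertex reaches every non-wandering vertex (uses cofinality). -/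
lemma reach_all (hcof : Cofinal G) {t : G.V} (ht : t ∈ NW G) (x : G.V) :
    Reach G x t := by
  set H : Set G.V := {x | ¬ Reach G x t} with hH
  have hher : Hereditary G H := by
    intro a ha hr
    exact ha (reach_trans (reach_arrow a) hr)
  have hsat : Saturated G H := by
    intro u _ hall
    intro hreach
    obtain ⟨π, hπs, hπr⟩ := hreach
    cases hπ : π.arrows with
    | nil =>
        -- u = t, use the loop at t
        have hut : u = t := by
          rw [← hπs, ← hπr, frng_eq_fr, hπ]; rfl
        obtain ⟨lp, hlen, hls, hlr⟩ := ht
        cases hl : lp.arrows with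
        | nil => rw [FinPath.length, hl] at hlen; simp at hlen
        | cons c l =>
            have hsrc : G.src c = u := by
              have h0 := lp.head_src c (by rw [hl]; rfl)
              rw [h0]; show lp.fsrc = u; rw [hls, hut]
            have hchain : l.Chain' fun a b => G.rng a = G.src b := by
              have := lp.chain; rw [hl] at this
              exact this.tail
            have hhead : ∀ a ∈ l.head?, G.src a = G.rng c := by
              have := lp.chain; rw [hl] at this; replace this := List.isChain_cons.mp this
              intro a ha; exact (this.1 a ha).symm
            have hmem : G.rng c ∈ H := hall c hsrc
            apply hmem
            refine ⟨⟨G.rng c, l, hhead, hchain⟩, rfl, ?_⟩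
            show fr G (G.rng c) l = t
            have h1 : fr G (G.rng c) l = lp.frng := by
              rw [frng_eq_fr, hl, fr_cons]
            rw [h1, hlr]
    | cons c l =>
        have hsrc : G.src c = u := by
          have := π.head_src c (by rw [hπ]; rfl)
          rw [this, ← hπs]; rfl
        have hchain : l.Chain' fun a b => G.rng a = G.src b := by
          have := π.chain; rw [hπ] at this; exact this.tail
        have hhead : ∀ a ∈ l.head?, G.src a = G.rng c := by
          have := π.chain; rw [hπ] at this; replace this := List.isChain_cons.mp this
          intro a ha; exact (this.1 a ha).symm
        have hmem : G.rng c ∈ H := hall c hsrc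
        apply hmem
        refine ⟨⟨G.rng c, l, hhead, hchain⟩, rfl, ?_⟩
        show fr G (G.rng c) l = t
        have h1 : fr G (G.rng c) l = π.frng := by
          rw [frng_eq_fr, hπ, fr_cons]
        rw [h1, hπr]
  rcases Set.eq_empty_or_nonempty H with he | hne
  · by_contra hx
    have : x ∈ H := hx
    rw [he] at this
    exact this
  · have := hcof H hne hher hsat
    have ht' : t ∈ H := this ▸ Set.mem_univ t
    exact absurd (reach_refl t) ht'

/-- Key decomposition: every arrow on a path is reachable from its source,
and leads (positively) to its range. -/
lemma key (l : List G.A) (b : G.V)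
    (hs : ∀ a ∈ l.head?, G.src a = b)
    (hc : l.Chain' fun a b => G.rng a = G.src b) :
    ∀ a ∈ l, Reach G b (G.src a) ∧
      ∃ ν : FinPath G, 0 < ν.length ∧ ν.fsrc = G.src a ∧ ν.frng = fr G b l := by
  induction l generalizing b with
  | nil => intro a ha; simp at ha
  | cons c l ih =>
      intro a ha
      rcases List.mem_cons.mp ha with rfl | ha'
      · have hsb : G.src a = b := hs a rfl
        constructor
        · rw [hsb]; exact reach_refl b
        · refine ⟨⟨b, a :: l, by intro x hx; simp at hx; subst hx; exact hsb, hc⟩, ?_, ?_, rfl⟩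
          · simp [FinPath.length]
          · show b = G.src a; exact hsb.symm
      · have hchain : l.Chain' fun a b => G.rng a = G.src b := hc.tail
        have hhead : ∀ x ∈ l.head?, G.src x = G.rng c := by
          replace hc := List.isChain_cons.mp hc
          intro x hx; exact (hc.1 x hx).symm
        obtain ⟨h1, h2⟩ := ih (G.rng c) hhead hchain a ha'
        constructor
        · have hcb : G.src c = b := hs c rfl
          exact reach_trans (hcb ▸ reach_arrow c) h1
        · rw [fr_cons]; exact h2

lemma reachpos_trans {x y z : G.V}
    (h1 : ∃ ν : FinPath G, 0 < ν.length ∧ ν.fsrc = x ∧ ν.frng = y)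
    (h2 : Reach G y z) :
    ∃ ν : FinPath G, 0 < ν.length ∧ ν.fsrc = x ∧ ν.frng = z := by
  obtain ⟨μ, hl, hμs, hμr⟩ := h1
  obtain ⟨δ, hδs, hδr⟩ := h2
  have hb : δ.base = μ.frng := by rw [hμr, ← hδs]; rfl
  refine ⟨μ.concat δ hb, ?_, hμs, by rw [frng_concat]; exact hδr⟩
  rw [length_concat]; omega

end CDG

open CDG in
/-- for a cofinal graph with `NW_G ≠ ∅`, the subgraph `NW_G` (with the
arrows emitted from `NW_G`) is strongly connected. -/
theorem stmt4 (G : CDG) (hcof : Cofinal G) (hne : (NW G).Nonempty)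
    (v w : G.V) (hv : v ∈ NW G) (hw : w ∈ NW G) :
    ∃ μ : FinPath G, 0 < μ.length ∧ μ.fsrc = v ∧ μ.frng = w ∧
      ∀ a ∈ μ.arrows, G.src a ∈ NW G := by
  classical
  obtain ⟨π, hπs, hπr⟩ := reach_all hcof hw v
  obtain ⟨lw, hlwlen, hlws, hlwr⟩ := hw
  have hb : lw.base = π.frng := by rw [hπr, ← hlws]; rfl
  refine ⟨π.concat lw hb, ?_, ?_, ?_, ?_⟩
  · rw [length_concat]; omega
  · exact hπs
  · rw [frng_concat]; exact hlwr
  · intro a ha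
    have hkey := key (π.concat lw hb).arrows (π.concat lw hb).base
      (π.concat lw hb).head_src (π.concat lw hb).chain a ha
    obtain ⟨h1, h2⟩ := hkey
    have hbase : (π.concat lw hb).base = v := hπs
    rw [hbase] at h1
    have hrng : fr G (π.concat lw hb).base (π.concat lw hb).arrows = w := by
      rw [← frng_eq_fr, frng_concat]; exact hlwr
    rw [hrng] at h2
    -- loop at src a : src a ⇝ w ⇝ v ⇝ src a
    have h3 : Reach G w v := reach_all hcof hv w
    exact reachpos_trans (reachpos_trans h2 h3) h1
end

section
/- Let G be a countable directed graph with no loop κ of positive length satisfying F(κ) = 0, and let A, {S_a}, {P_v} be as in the context. Let μ, ν, δ be finite paths in G such that |δ| > max{|μ|, |ν|} and F(μ) = F(ν). Then P_δ S_μ S_ν* P_δ = 0 when μ ≠ ν, and P_δ S_μ S_μ* P_δ = P_δ P_μ when μ = ν. -/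
open MeasureTheory
open scoped ENNReal

/-- The element `S_μ` associated to a finite path `μ`, with `S_v = P_v` for a vertex. -/
def Spath {R : Type*} [Mul R] {G : CDG} (S : G.A → R) (P : G.V → R)
    (μ : CDG.FinPath G) : R :=
  match μ.arrows with
  | [] => P μ.base
  | a :: l => l.foldl (fun x b => x * S b) (S a)


set_option linter.unusedSectionVars false
section CStarAux
variable {R : Type*} [NonUnitalNormedRing R] [StarRing R] [CStarRing R]
  [PartialOrder R] [StarOrderedRing R]

private def Tq (q x : R) : R := x - q * x - x * q + q * (x * q)

private lemma Tq_gen (q s : R) (hq : star q = q) :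
    Tq q (star s * s) = star (s - s * q) * (s - s * q) := by
  simp only [Tq, star_sub, star_mul, hq, sub_mul, mul_sub, mul_assoc]
  abel

private lemma Tq_add (q x y : R) : Tq q (x + y) = Tq q x + Tq q y := by
  simp only [Tq, mul_add, add_mul]
  abel

private lemma Tq_sub (q x y : R) : Tq q (x - y) = Tq q x - Tq q y := by
  simp only [Tq, mul_sub, sub_mul]
  abel

private lemma Tq_key (q : R) (hq : star q = q) {x : R} (hx : 0 ≤ x) :
    0 ≤ Tq q x ∧ (Tq q x = 0 → x * q = x) := by
  rw [StarOrderedRing.nonneg_iff] at hx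
  induction hx using AddSubmonoid.closure_induction with
  | mem y hy =>
    obtain ⟨s, rfl⟩ := hy
    rw [Tq_gen q s hq]
    refine ⟨star_mul_self_nonneg _, fun h => ?_⟩
    have h1 : s - s * q = 0 := (CStarRing.star_mul_self_eq_zero_iff _).mp h
    have h2 : s * q = s := by rwa [sub_eq_zero, eq_comm] at h1
    rw [mul_assoc, h2]
  | zero =>
    constructor
    · simp [Tq]
    · intro _; simp
  | add y z hy hz ihy ihz =>
    have hadd := Tq_add q y z
    constructor
    · rw [hadd]; exact add_nonneg ihy.1 ihz.1
    · intro h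
      rw [hadd] at h
      have hy0 : Tq q y = 0 :=
        le_antisymm (by rw [← h]; exact le_add_of_nonneg_right ihz.1) ihy.1
      have hz0 : Tq q z = 0 :=
        le_antisymm (by rw [← h]; exact le_add_of_nonneg_left ihy.1) ihz.1
      rw [add_mul, ihy.2 hy0, ihz.2 hz0]

private lemma absorb_right (q : R) (hq : star q = q) (hq2 : q * q = q)
    {x : R} (hx : 0 ≤ x) (hxq : x ≤ q) : x * q = x := by
  obtain ⟨h1, h2⟩ := Tq_key q hq hx
  have hq0 : Tq q q = 0 := by
    simp only [Tq, hq2]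
    abel
  have h3 : 0 ≤ Tq q (q - x) := (Tq_key q hq (sub_nonneg.2 hxq)).1
  rw [Tq_sub, hq0, zero_sub] at h3
  exact h2 (le_antisymm (by simpa using h3) h1)

private lemma absorb_left (q : R) (hq : star q = q) (hq2 : q * q = q)
    {x : R} (hx : 0 ≤ x) (hxq : x ≤ q) : q * x = x := by
  have h := absorb_right q hq hq2 hx hxq
  have hxs : star x = x := (IsSelfAdjoint.of_nonneg hx).star_eq
  calc q * x = star (x * q) := by rw [star_mul, hq, hxs]
  _ = star x := by rw [h]
  _ = x := hxs

/-- If `x * x* ≤ q` for a projection `q`, then `q * x = x`. -/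
lemma proj_absorb_mul (q x : R) (hq : star q = q) (hq2 : q * q = q)
    (hle : x * star x ≤ q) : q * x = x := by
  have hb : 0 ≤ x * star x := mul_star_self_nonneg x
  have h1 : q * (x * star x) = x * star x := absorb_left q hq hq2 hb hle
  have h2 : x * star x * q = x * star x := absorb_right q hq hq2 hb hle
  have e : (x - q * x) * star (x - q * x) =
      x * star x - x * star x * q - q * (x * star x) + q * (x * star x * q) := by
    simp only [star_sub, star_mul, hq, mul_sub, sub_mul, mul_assoc]
    abel
  have e0 : (x - q * x) * star (x - q * x) = 0 := by
    rw [e, h2, h1]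
    abel
  have := (CStarRing.mul_star_self_eq_zero_iff _).mp e0
  rw [sub_eq_zero] at this
  exact this.symm

end CStarAux

section GraphAux
open CDG List
variable {R : Type*} [NonUnitalNormedRing R] [StarRing R] [CStarRing R]
  [PartialOrder R] [StarOrderedRing R]
variable {G : CDG}

/-- The word of `S`'s over a nonempty list `a :: l` of arrows. -/
def slw (S : G.A → R) (a : G.A) (l : List G.A) : R :=
  l.foldl (fun x b => x * S b) (S a)

lemma slw_nil (S : G.A → R) (a : G.A) : slw S a [] = S a := rfl

lemma foldl_mul_slw (S : G.A → R) (l : List G.A) (y z : R) :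
    l.foldl (fun x c => x * S c) (y * z) = y * l.foldl (fun x c => x * S c) z := by
  induction l generalizing z with
  | nil => rfl
  | cons c m ih =>
    simp only [List.foldl_cons]
    rw [mul_assoc]
    exact ih (z * S c)

lemma slw_cons (S : G.A → R) (a b : G.A) (l : List G.A) :
    slw S a (b :: l) = S a * slw S b l := by
  simp only [slw, List.foldl_cons]
  exact foldl_mul_slw S l (S a) (S b)

lemma slw_append (S : G.A → R) (a b : G.A) (l m : List G.A) :
    slw S a (l ++ b :: m) = slw S a l * slw S b m := by
  induction l generalizing a with
  | nil => rw [List.nil_append, slw_cons, slw_nil]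
  | cons c l' ih => rw [List.cons_append, slw_cons, ih, slw_cons, mul_assoc]

variable {S : G.A → R} {P : G.V → R}

lemma P_src_S (hsa : ∀ v : G.V, IsSelfAdjoint (P v))
    (hidem : ∀ v : G.V, P v * P v = P v)
    (hck2 : ∀ a : G.A, S a * star (S a) ≤ P (G.src a)) (a : G.A) :
    P (G.src a) * S a = S a :=
  proj_absorb_mul _ _ (hsa _).star_eq (hidem _) (hck2 a)

lemma S_mul_P_rng (hsa : ∀ v : G.V, IsSelfAdjoint (P v))
    (hidem : ∀ v : G.V, P v * P v = P v)
    (hck1 : ∀ a : G.A, star (S a) * S a = P (G.rng a)) (a : G.A) :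
    S a * P (G.rng a) = S a := by
  have e : star (S a * P (G.rng a) - S a) * (S a * P (G.rng a) - S a)
      = P (G.rng a) * (star (S a) * S a) * P (G.rng a)
        - P (G.rng a) * (star (S a) * S a)
        - star (S a) * S a * P (G.rng a) + star (S a) * S a := by
    simp only [star_sub, star_mul, (hsa _).star_eq, sub_mul, mul_sub, mul_assoc]
    abel
  have e0 : star (S a * P (G.rng a) - S a) * (S a * P (G.rng a) - S a) = 0 := by
    rw [e, hck1]
    simp only [hidem]
    abel
  have := (CStarRing.star_mul_self_eq_zero_iff _).mp e0
  rwa [sub_eq_zero] at this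

lemma S_orth (hsa : ∀ v : G.V, IsSelfAdjoint (P v))
    (hidem : ∀ v : G.V, P v * P v = P v)
    (horth : ∀ v w : G.V, v ≠ w → P v * P w = 0)
    (hck1 : ∀ a : G.A, star (S a) * S a = P (G.rng a))
    (hck2 : ∀ a : G.A, S a * star (S a) ≤ P (G.src a))
    (hck3 : ∀ (v : G.V) (E : Finset G.A), (∀ a ∈ E, G.src a = v) →
      ∑ a ∈ E, S a * star (S a) ≤ P v)
    {a b : G.A} (hab : a ≠ b) : star (S a) * S b = 0 := by
  classical
  have hPb : star (S b) * P (G.src b) = star (S b) := by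
    calc star (S b) * P (G.src b) = star (P (G.src b) * S b) := by
          rw [star_mul, (hsa _).star_eq]
      _ = star (S b) := by rw [P_src_S hsa hidem hck2]
  by_cases h : G.src a = G.src b
  · have hsum : S a * star (S a) + S b * star (S b) ≤ P (G.src b) := by
      have h3 := hck3 (G.src b) {a, b} ?_
      · rwa [Finset.sum_pair hab] at h3
      · intro c hc
        rcases Finset.mem_insert.mp hc with rfl | hc
        · exact h
        · rw [Finset.mem_singleton.mp hc]
    have h1 : S a * star (S a) ≤ P (G.src b) - S b * star (S b) :=
      le_sub_iff_add_le.mpr hsum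
    have h2 := star_left_conjugate_le_conjugate h1 (S b)
    have hrhs : star (S b) * (P (G.src b) - S b * star (S b)) * S b = 0 := by
      have t1 : star (S b) * P (G.src b) * S b = P (G.rng b) := by
        rw [hPb, hck1]
      have t2 : star (S b) * (S b * star (S b)) * S b = P (G.rng b) := by
        rw [show star (S b) * (S b * star (S b)) * S b
            = (star (S b) * S b) * (star (S b) * S b) by simp only [mul_assoc], hck1, hidem]
      rw [mul_sub, sub_mul, t1, t2, sub_self]
    have hge : 0 ≤ star (S b) * (S a * star (S a)) * S b :=
      star_left_conjugate_nonneg (mul_star_self_nonneg _) _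
    have h0 : star (S b) * (S a * star (S a)) * S b = 0 :=
      le_antisymm (hrhs ▸ h2) hge
    have hz : star (star (S a) * S b) * (star (S a) * S b) = 0 := by
      rw [star_mul, star_star]
      calc star (S b) * S a * (star (S a) * S b)
          = star (S b) * (S a * star (S a)) * S b := by simp only [mul_assoc]
        _ = 0 := h0
    exact (CStarRing.star_mul_self_eq_zero_iff _).mp hz
  · have h1 : star (S a) * P (G.src a) = star (S a) := by
      calc star (S a) * P (G.src a) = star (P (G.src a) * S a) := by
            rw [star_mul, (hsa _).star_eq]
        _ = star (S a) := by rw [P_src_S hsa hidem hck2]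
    calc star (S a) * S b = star (S a) * P (G.src a) * (P (G.src b) * S b) := by
          rw [h1, P_src_S hsa hidem hck2]
      _ = star (S a) * (P (G.src a) * P (G.src b)) * S b := by simp only [mul_assoc]
      _ = 0 := by rw [horth _ _ h, mul_zero, zero_mul]

lemma P_src_slw (hsa : ∀ v : G.V, IsSelfAdjoint (P v))
    (hidem : ∀ v : G.V, P v * P v = P v)
    (hck2 : ∀ a : G.A, S a * star (S a) ≤ P (G.src a))
    (b : G.A) (l : List G.A) : P (G.src b) * slw S b l = slw S b l := by
  cases l with
  | nil => exact P_src_S hsa hidem hck2 b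
  | cons c m => rw [slw_cons, ← mul_assoc, P_src_S hsa hidem hck2]

lemma slw_mul_P (hsa : ∀ v : G.V, IsSelfAdjoint (P v))
    (hidem : ∀ v : G.V, P v * P v = P v)
    (hck1 : ∀ a : G.A, star (S a) * S a = P (G.rng a))
    (a : G.A) (l : List G.A) :
    slw S a l * P (G.rng (l.getLastD a)) = slw S a l := by
  induction l generalizing a with
  | nil => exact S_mul_P_rng hsa hidem hck1 a
  | cons b m ih =>
    rw [List.getLastD_cons, slw_cons, mul_assoc, ih]

lemma slw_star_slw (hsa : ∀ v : G.V, IsSelfAdjoint (P v))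
    (hidem : ∀ v : G.V, P v * P v = P v)
    (hck1 : ∀ a : G.A, star (S a) * S a = P (G.rng a))
    (hck2 : ∀ a : G.A, S a * star (S a) ≤ P (G.src a))
    (a : G.A) (l : List G.A)
    (hc : List.Chain' (fun x y => G.rng x = G.src y) (a :: l)) :
    star (slw S a l) * slw S a l = P (G.rng (l.getLastD a)) := by
  induction l generalizing a with
  | nil => exact hck1 a
  | cons b m ih =>
    have hab : G.rng a = G.src b := (List.isChain_cons_cons.mp hc).1
    have hc' : List.Chain' (fun x y => G.rng x = G.src y) (b :: m) :=
      (List.isChain_cons_cons.mp hc).2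
    rw [slw_cons, star_mul, List.getLastD_cons]
    calc star (slw S b m) * star (S a) * (S a * slw S b m)
        = star (slw S b m) * ((star (S a) * S a) * slw S b m) := by
          simp only [mul_assoc]
      _ = star (slw S b m) * slw S b m := by
          rw [hck1, hab, P_src_slw hsa hidem hck2]
      _ = P (G.rng (m.getLastD b)) := ih b hc'

lemma slw_orth (hsa : ∀ v : G.V, IsSelfAdjoint (P v))
    (hidem : ∀ v : G.V, P v * P v = P v)
    (horth : ∀ v w : G.V, v ≠ w → P v * P w = 0)
    (hck1 : ∀ a : G.A, star (S a) * S a = P (G.rng a))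
    (hck2 : ∀ a : G.A, S a * star (S a) ≤ P (G.src a))
    (hck3 : ∀ (v : G.V) (E : Finset G.A), (∀ a ∈ E, G.src a = v) →
      ∑ a ∈ E, S a * star (S a) ≤ P v) :
    ∀ (l : List G.A) (a c : G.A) (m : List G.A),
    List.Chain' (fun x y => G.rng x = G.src y) (a :: l) →
    List.Chain' (fun x y => G.rng x = G.src y) (c :: m) →
    ¬ (a :: l) <+: (c :: m) → ¬ (c :: m) <+: (a :: l) →
    star (slw S a l) * slw S c m = 0 := by
  intro l
  induction l with
  | nil =>
    intro a c m _ _ hp1 _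
    have hac : a ≠ c := by
      rintro rfl
      exact hp1 (List.cons_prefix_cons.mpr ⟨rfl, List.nil_prefix⟩)
    have hS := S_orth hsa hidem horth hck1 hck2 hck3 hac
    cases m with
    | nil => exact hS
    | cons d m' =>
      rw [slw_nil, slw_cons, ← mul_assoc, hS, zero_mul]
  | cons b l' ih =>
    intro a c m h1 h2 hp1 hp2
    by_cases hac : a = c
    · subst hac
      cases m with
      | nil => exact absurd (List.cons_prefix_cons.mpr ⟨rfl, List.nil_prefix⟩) hp2
      | cons d m' =>
        have hab : G.rng a = G.src b := (List.isChain_cons_cons.mp h1).1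
        have had : G.rng a = G.src d := (List.isChain_cons_cons.mp h2).1
        have h1' := (List.isChain_cons_cons.mp h1).2
        have h2' := (List.isChain_cons_cons.mp h2).2
        rw [slw_cons, slw_cons, star_mul]
        calc star (slw S b l') * star (S a) * (S a * slw S d m')
            = star (slw S b l') * ((star (S a) * S a) * slw S d m') := by
              simp only [mul_assoc]
          _ = star (slw S b l') * slw S d m' := by
              rw [hck1, had, P_src_slw hsa hidem hck2]
          _ = 0 := by
              refine ih b d m' h1' h2' ?_ ?_
              · exact fun hp => hp1 (List.cons_prefix_cons.mpr ⟨rfl, hp⟩)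
              · exact fun hp => hp2 (List.cons_prefix_cons.mpr ⟨rfl, hp⟩)
    · have hS := S_orth hsa hidem horth hck1 hck2 hck3 hac
      rw [slw_cons, star_mul]
      cases m with
      | nil =>
        rw [slw_nil, mul_assoc, hS, mul_zero]
      | cons d m' =>
        rw [slw_cons]
        calc star (slw S b l') * star (S a) * (S c * slw S d m')
            = star (slw S b l') * ((star (S a) * S c) * slw S d m') := by
              simp only [mul_assoc]
          _ = 0 := by rw [hS, zero_mul, mul_zero]

lemma chain_junction :
    ∀ (l : List G.A) (a d : G.A) (m : List G.A),
    List.Chain' (fun x y => G.rng x = G.src y) (a :: (l ++ d :: m)) →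
    G.rng (l.getLastD a) = G.src d := by
  intro l
  induction l with
  | nil => exact fun a d m h => (List.isChain_cons_cons.mp h).1
  | cons b l' ih =>
    intro a d m h
    rw [List.getLastD_cons]
    exact ih b d m (List.isChain_cons_cons.mp h).2

lemma slw_prefix_reduce (hsa : ∀ v : G.V, IsSelfAdjoint (P v))
    (hidem : ∀ v : G.V, P v * P v = P v)
    (hck1 : ∀ a : G.A, star (S a) * S a = P (G.rng a))
    (hck2 : ∀ a : G.A, S a * star (S a) ≤ P (G.src a))
    (a d : G.A) (l m : List G.A)
    (hc : List.Chain' (fun x y => G.rng x = G.src y) (a :: (l ++ d :: m))) :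
    star (slw S a l) * slw S a (l ++ d :: m) = slw S d m := by
  have hc1 : List.Chain' (fun x y => G.rng x = G.src y) (a :: l) :=
    hc.prefix ⟨d :: m, by simp⟩
  rw [slw_append, ← mul_assoc, slw_star_slw hsa hidem hck1 hck2 a l hc1,
    chain_junction l a d m hc, P_src_slw hsa hidem hck2]

lemma Spath_cons (S : G.A → R) (P : G.V → R) (μ : FinPath G) (a : G.A) (l : List G.A)
    (h : μ.arrows = a :: l) : Spath S P μ = slw S a l := by
  unfold Spath
  rw [h]
  rfl

lemma Spath_nil (S : G.A → R) (P : G.V → R) (μ : FinPath G)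
    (h : μ.arrows = []) : Spath S P μ = P μ.base := by
  unfold Spath
  rw [h]

lemma finpath_ext {μ ν : FinPath G} (h1 : μ.base = ν.base)
    (h2 : μ.arrows = ν.arrows) : μ = ν := by
  obtain ⟨b1, a1, p1, q1⟩ := μ
  obtain ⟨b2, a2, p2, q2⟩ := ν
  dsimp at h1 h2
  subst h1; subst h2
  rfl

lemma path_prefix_eq (hsa : ∀ v : G.V, IsSelfAdjoint (P v))
    (hidem : ∀ v : G.V, P v * P v = P v)
    (hck1 : ∀ a : G.A, star (S a) * S a = P (G.rng a))
    (hck2 : ∀ a : G.A, S a * star (S a) ≤ P (G.src a))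
    (μ δ : FinPath G) (hb : μ.base = δ.base)
    (d : G.A) (m : List G.A) (hδ : δ.arrows = μ.arrows ++ d :: m) :
    star (Spath S P μ) * Spath S P δ = slw S d m := by
  cases hμ : μ.arrows with
  | nil =>
    rw [hμ, List.nil_append] at hδ
    have hsd : G.src d = δ.base := δ.head_src d (by rw [hδ]; rfl)
    rw [Spath_nil S P μ hμ, Spath_cons S P δ d m hδ, (hsa _).star_eq, hb, ← hsd,
      P_src_slw hsa hidem hck2]
  | cons a l =>
    rw [hμ, List.cons_append] at hδ
    rw [Spath_cons S P μ a l hμ, Spath_cons S P δ a (l ++ d :: m) hδ]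
    have hc := δ.chain
    rw [hδ] at hc
    exact slw_prefix_reduce hsa hidem hck1 hck2 a d l m hc

lemma path_prefix_absorb (hsa : ∀ v : G.V, IsSelfAdjoint (P v))
    (hidem : ∀ v : G.V, P v * P v = P v)
    (hck1 : ∀ a : G.A, star (S a) * S a = P (G.rng a))
    (hck2 : ∀ a : G.A, S a * star (S a) ≤ P (G.src a))
    (μ δ : FinPath G) (hb : μ.base = δ.base)
    (d : G.A) (m : List G.A) (hδ : δ.arrows = μ.arrows ++ d :: m) :
    Spath S P μ * (star (Spath S P μ) * Spath S P δ) = Spath S P δ := by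
  rw [path_prefix_eq hsa hidem hck1 hck2 μ δ hb d m hδ]
  cases hμ : μ.arrows with
  | nil =>
    rw [hμ, List.nil_append] at hδ
    have hsd : G.src d = δ.base := δ.head_src d (by rw [hδ]; rfl)
    rw [Spath_nil S P μ hμ, Spath_cons S P δ d m hδ, hb, ← hsd,
      P_src_slw hsa hidem hck2]
  | cons a l =>
    rw [hμ, List.cons_append] at hδ
    rw [Spath_cons S P μ a l hμ, Spath_cons S P δ a (l ++ d :: m) hδ, slw_append]

lemma path_nonprefix (hsa : ∀ v : G.V, IsSelfAdjoint (P v))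
    (hidem : ∀ v : G.V, P v * P v = P v)
    (horth : ∀ v w : G.V, v ≠ w → P v * P w = 0)
    (hck1 : ∀ a : G.A, star (S a) * S a = P (G.rng a))
    (hck2 : ∀ a : G.A, S a * star (S a) ≤ P (G.src a))
    (hck3 : ∀ (v : G.V) (E : Finset G.A), (∀ a ∈ E, G.src a = v) →
      ∑ a ∈ E, S a * star (S a) ≤ P v)
    (μ δ : FinPath G) (hlen : μ.length < δ.length)
    (h : ¬ (μ.base = δ.base ∧ μ.arrows <+: δ.arrows)) :
    star (Spath S P μ) * Spath S P δ = 0 := by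
  obtain ⟨c, m', hδ⟩ : ∃ c m', δ.arrows = c :: m' := by
    cases hd : δ.arrows with
    | nil =>
      exfalso
      have : δ.length = 0 := by simp [FinPath.length, hd]
      omega
    | cons c m' => exact ⟨c, m', rfl⟩
  have hsc : G.src c = δ.base := δ.head_src c (by rw [hδ]; rfl)
  have hcδ : List.Chain' (fun x y => G.rng x = G.src y) (c :: m') := by
    have := δ.chain; rwa [hδ] at this
  cases hμ : μ.arrows with
  | nil =>
    have hbne : μ.base ≠ δ.base := fun hbeq => h ⟨hbeq, by rw [hμ]; exact List.nil_prefix⟩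
    rw [Spath_nil S P μ hμ, Spath_cons S P δ c m' hδ, (hsa _).star_eq,
      ← P_src_slw hsa hidem hck2 c m', ← mul_assoc, hsc,
      horth _ _ hbne, zero_mul]
  | cons a l =>
    have hsa' : G.src a = μ.base := μ.head_src a (by rw [hμ]; rfl)
    have hcμ : List.Chain' (fun x y => G.rng x = G.src y) (a :: l) := by
      have := μ.chain; rwa [hμ] at this
    have hlen' : (a :: l).length < (c :: m').length := by
      have h1 : μ.length = (a :: l).length := by simp [FinPath.length, hμ]
      have h2 : δ.length = (c :: m').length := by simp [FinPath.length, hδ]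
      omega
    have hnp2 : ¬ (c :: m') <+: (a :: l) := fun hp => by
      have := hp.length_le; omega
    rw [Spath_cons S P μ a l hμ, Spath_cons S P δ c m' hδ]
    by_cases hbeq : μ.base = δ.base
    · have hnp : ¬ (a :: l) <+: (c :: m') := by
        intro hp
        exact h ⟨hbeq, by rw [hμ, hδ]; exact hp⟩
      exact slw_orth hsa hidem horth hck1 hck2 hck3 l a c m' hcμ hcδ hnp hnp2
    · have hac : a ≠ c := fun he => hbeq (by rw [← hsa', he, hsc])
      refine slw_orth hsa hidem horth hck1 hck2 hck3 l a c m' hcμ hcδ ?_ hnp2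
      exact fun hp => hac (List.cons_prefix_cons.mp hp).1

end GraphAux

open CDG in
/-- in a C*-algebra with Cuntz–Krieger elements for `G`, if `G` has no
loop `κ` of positive length with `F(κ) = 0`, and `μ, ν, δ` are finite paths with
`|δ| > max{|μ|,|ν|}` and `F(μ) = F(ν)`, then `P_δ S_μ S_ν* P_δ = 0` when `μ ≠ ν` and
`P_δ S_μ S_μ* P_δ = P_δ P_μ`. -/
theorem stmt17 {R : Type*} [NonUnitalNormedRing R] [StarRing R] [CStarRing R]
    [PartialOrder R] [StarOrderedRing R] [CompleteSpace R]
    (G : CDG) (F : G.A → ℝ)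
    (hnoloop : ∀ κ : FinPath G, 0 < κ.length → κ.fsrc = κ.frng → pot F κ ≠ 0)
    (S : G.A → R) (P : G.V → R)
    (hsa : ∀ v : G.V, IsSelfAdjoint (P v))
    (hidem : ∀ v : G.V, P v * P v = P v)
    (horth : ∀ v w : G.V, v ≠ w → P v * P w = 0)
    (hck1 : ∀ a : G.A, star (S a) * S a = P (G.rng a))
    (hck2 : ∀ a : G.A, S a * star (S a) ≤ P (G.src a))
    (hck3 : ∀ (v : G.V) (E : Finset G.A), (∀ a ∈ E, G.src a = v) →
      ∑ a ∈ E, S a * star (S a) ≤ P v)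
    (hck4 : ∀ v : G.V, v ∉ Vinf G → ∀ E : Finset G.A,
      (↑E = {a : G.A | G.src a = v}) → P v = ∑ a ∈ E, S a * star (S a))
    (μ ν δ : FinPath G) (hlen : max μ.length ν.length < δ.length)
    (hF : pot F μ = pot F ν) :
    (μ ≠ ν →
      (Spath S P δ * star (Spath S P δ)) * (Spath S P μ * star (Spath S P ν)) *
        (Spath S P δ * star (Spath S P δ)) = 0) ∧
    ((Spath S P δ * star (Spath S P δ)) * (Spath S P μ * star (Spath S P μ)) *
        (Spath S P δ * star (Spath S P δ)) =
      (Spath S P δ * star (Spath S P δ)) * (Spath S P μ * star (Spath S P μ))) := by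
  classical
  have hPsel : ∀ x : R, star (x * star x) = x * star x := fun x => by
    rw [star_mul, star_star]
  have hμlen : μ.length < δ.length := lt_of_le_of_lt (le_max_left _ _) hlen
  have hνlen : ν.length < δ.length := lt_of_le_of_lt (le_max_right _ _) hlen
  obtain ⟨c0, m0, hδarr⟩ : ∃ c m', δ.arrows = c :: m' := by
    cases hd : δ.arrows with
    | nil =>
      exfalso
      have h0 : δ.length = 0 := by simp [CDG.FinPath.length, hd]
      omega
    | cons c m' => exact ⟨c, m', rfl⟩
  have hδchain : List.Chain' (fun x y => G.rng x = G.src y) (c0 :: m0) := by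
    have := δ.chain; rwa [hδarr] at this
  have hPδ : (Spath S P δ * star (Spath S P δ)) * (Spath S P δ * star (Spath S P δ))
      = Spath S P δ * star (Spath S P δ) := by
    have hss : star (Spath S P δ) * Spath S P δ = P (G.rng (m0.getLastD c0)) := by
      rw [Spath_cons S P δ c0 m0 hδarr]
      exact slw_star_slw hsa hidem hck1 hck2 c0 m0 hδchain
    have habs2 : Spath S P δ * P (G.rng (m0.getLastD c0)) = Spath S P δ := by
      rw [Spath_cons S P δ c0 m0 hδarr]
      exact slw_mul_P hsa hidem hck1 c0 m0
    calc (Spath S P δ * star (Spath S P δ)) * (Spath S P δ * star (Spath S P δ))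
        = (Spath S P δ * (star (Spath S P δ) * Spath S P δ)) * star (Spath S P δ) := by
          simp only [mul_assoc]
      _ = Spath S P δ * star (Spath S P δ) := by rw [hss, habs2]
  constructor
  · -- part 1
    intro hne
    have key : ∀ ρ τ : FinPath G, ρ.length < δ.length → τ.length < δ.length →
        pot F ρ = pot F τ → ρ ≠ τ → ρ.length ≤ τ.length →
        (Spath S P δ * star (Spath S P δ)) * (Spath S P ρ * star (Spath S P τ)) *
          (Spath S P δ * star (Spath S P δ)) = 0 := by
      intro ρ τ hρl hτl hpot hρτ hlenle
      by_cases hρpre : ρ.base = δ.base ∧ ρ.arrows <+: δ.arrows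
      swap
      · have h0 := path_nonprefix hsa hidem horth hck1 hck2 hck3 ρ δ hρl hρpre
        have h0' : star (Spath S P δ) * Spath S P ρ = 0 := by
          have h0s := congrArg star h0
          rwa [star_mul, star_star, star_zero] at h0s
        have e : (Spath S P δ * star (Spath S P δ)) * (Spath S P ρ * star (Spath S P τ)) *
            (Spath S P δ * star (Spath S P δ))
            = Spath S P δ * ((star (Spath S P δ) * Spath S P ρ) *
              (star (Spath S P τ) * (Spath S P δ * star (Spath S P δ)))) := by
          simp only [mul_assoc]
        rw [e, h0', zero_mul, mul_zero]
      by_cases hτpre : τ.base = δ.base ∧ τ.arrows <+: δ.arrows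
      swap
      · have h0 := path_nonprefix hsa hidem horth hck1 hck2 hck3 τ δ hτl hτpre
        have e : (Spath S P δ * star (Spath S P δ)) * (Spath S P ρ * star (Spath S P τ)) *
            (Spath S P δ * star (Spath S P δ))
            = Spath S P δ * (star (Spath S P δ) * (Spath S P ρ *
              ((star (Spath S P τ) * Spath S P δ) * star (Spath S P δ)))) := by
          simp only [mul_assoc]
        rw [e, h0, zero_mul, mul_zero, mul_zero, mul_zero]
      obtain ⟨hρb, hρpre'⟩ := hρpre
      obtain ⟨hτb, hτpre'⟩ := hτpre
      have hρl' : ρ.arrows.length < δ.arrows.length := hρl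
      have hτl' : τ.arrows.length < δ.arrows.length := hτl
      have hlt : ρ.length < τ.length := by
        rcases lt_or_eq_of_le hlenle with hl | hl
        · exact hl
        · exfalso
          apply hρτ
          have harr : ρ.arrows = τ.arrows := by
            rcases List.prefix_or_prefix_of_prefix hρpre' hτpre' with hc | hc
            · exact hc.eq_of_length hl
            · exact (hc.eq_of_length hl.symm).symm
          exact finpath_ext (hρb.trans hτb.symm) harr
      have hlt' : ρ.arrows.length < τ.arrows.length := hlt
      obtain ⟨rest1, hr1⟩ := hρpre'
      obtain ⟨rest2, hr2⟩ := hτpre'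
      have hrest1ne : rest1 ≠ [] := by
        intro h'; rw [h', List.append_nil] at hr1
        have := congrArg List.length hr1
        omega
      obtain ⟨d, m, rfl⟩ := List.exists_cons_of_ne_nil hrest1ne
      have hrest2ne : rest2 ≠ [] := by
        intro h'; rw [h', List.append_nil] at hr2
        have := congrArg List.length hr2
        omega
      obtain ⟨f, t, rfl⟩ := List.exists_cons_of_ne_nil hrest2ne
      have len1 := congrArg List.length hr1
      have len2 := congrArg List.length hr2
      simp only [List.length_append, List.length_cons] at len1 len2
      have hρτpre : ρ.arrows <+: τ.arrows := by
        rcases List.prefix_or_prefix_of_prefix ⟨d :: m, hr1⟩ ⟨f :: t, hr2⟩ with hc | hc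
        · exact hc
        · exfalso
          have := hc.length_le
          omega
      obtain ⟨κ, hκ⟩ := hρτpre
      have hκne : κ ≠ [] := by
        intro h'; rw [h', List.append_nil] at hκ
        have := congrArg List.length hκ
        omega
      have hdm : d :: m = κ ++ f :: t := by
        apply List.append_cancel_left (as := ρ.arrows)
        rw [hr1, ← hr2, ← hκ, List.append_assoc]
      have hcdm : List.Chain' (fun x y => G.rng x = G.src y) (d :: m) :=
        δ.chain.suffix ⟨ρ.arrows, hr1⟩
      have hcft : List.Chain' (fun x y => G.rng x = G.src y) (f :: t) :=
        δ.chain.suffix ⟨τ.arrows, hr2⟩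
      have hmid : star (slw S d m) * slw S f t = 0 := by
        refine slw_orth hsa hidem horth hck1 hck2 hck3 m d f t hcdm hcft ?_ ?_
        · intro hp
          have := hp.length_le
          simp only [List.length_cons] at this
          omega
        · intro hp
          obtain ⟨g, κ', rfl⟩ := List.exists_cons_of_ne_nil hκne
          have hdm' := hdm
          rw [List.cons_append] at hdm'
          injection hdm' with hgd hm
          have hfd : f = d := (List.cons_prefix_cons.mp hp).1
          have hκchain : List.Chain' (fun x y => G.rng x = G.src y) (g :: κ') :=
            hcdm.prefix ⟨f :: t, hdm.symm⟩
          have hc2 : List.Chain' (fun x y => G.rng x = G.src y) ((g :: κ') ++ f :: t) := by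
            rw [← hdm]; exact hcdm
          obtain ⟨-, -, hj⟩ := List.isChain_append.mp hc2
          have hjun : G.rng ((g :: κ').getLast (List.cons_ne_nil g κ')) = G.src f :=
            hj _ (List.getLast?_eq_getLast _) f rfl
          have hhead : ∀ x ∈ (g :: κ').head?, G.src x = G.src g := by
            intro x hx
            simp only [List.head?_cons, Option.mem_def, Option.some.injEq] at hx
            rw [← hx]
          have hpt : ((g :: κ').map F).sum = 0 := by
            have h2 : pot F τ = pot F ρ + ((g :: κ').map F).sum := by
              simp only [pot, ← hκ, List.map_append, List.sum_append]
            rw [← hpot] at h2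
            linarith
          exact hnoloop ⟨G.src g, g :: κ', hhead, hκchain⟩
            (Nat.succ_pos _)
            (by
              show G.src g = CDG.FinPath.frng _
              simp only [CDG.FinPath.frng]
              rw [List.getLast?_eq_getLast (List.cons_ne_nil g κ')]
              simp only [Option.elim_some]
              rw [hjun, hfd, hgd])
            (by
              show ((g :: κ').map F).sum = 0
              exact hpt)
      have e1 : star (Spath S P δ) * Spath S P ρ = star (slw S d m) := by
        have h1 := path_prefix_eq hsa hidem hck1 hck2 ρ δ hρb d m hr1.symm
        have h1s := congrArg star h1
        rwa [star_mul, star_star] at h1s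
      have e2 : star (Spath S P τ) * Spath S P δ = slw S f t :=
        path_prefix_eq hsa hidem hck1 hck2 τ δ hτb f t hr2.symm
      have efin : (Spath S P δ * star (Spath S P δ)) * (Spath S P ρ * star (Spath S P τ)) *
          (Spath S P δ * star (Spath S P δ))
          = Spath S P δ * ((star (Spath S P δ) * Spath S P ρ) *
            ((star (Spath S P τ) * Spath S P δ) * star (Spath S P δ))) := by
        simp only [mul_assoc]
      rw [efin, e1, e2, ← mul_assoc (star (slw S d m)), hmid, zero_mul, mul_zero]
    rcases le_total μ.length ν.length with hle | hle
    · exact key μ ν hμlen hνlen hF hne hle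
    · have hkey := key ν μ hνlen hμlen hF.symm (Ne.symm hne) hle
      have hkeys := congrArg star hkey
      rw [star_zero] at hkeys
      calc (Spath S P δ * star (Spath S P δ)) * (Spath S P μ * star (Spath S P ν)) *
          (Spath S P δ * star (Spath S P δ))
          = star ((Spath S P δ * star (Spath S P δ)) * (Spath S P ν * star (Spath S P μ)) *
            (Spath S P δ * star (Spath S P δ))) := by
            simp only [star_mul, star_star, mul_assoc]
        _ = 0 := hkeys
  · -- part 2
    by_cases hpre : μ.base = δ.base ∧ μ.arrows <+: δ.arrows
    · obtain ⟨hb, rest, hr⟩ := hpre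
      have hμlen' : μ.arrows.length < δ.arrows.length := hμlen
      have hrne : rest ≠ [] := by
        intro h'; rw [h', List.append_nil] at hr
        have := congrArg List.length hr
        omega
      obtain ⟨d, m, rfl⟩ := List.exists_cons_of_ne_nil hrne
      have habs := path_prefix_absorb hsa hidem hck1 hck2 μ δ hb d m hr.symm
      have h21 : (Spath S P μ * star (Spath S P μ)) * (Spath S P δ * star (Spath S P δ))
          = Spath S P δ * star (Spath S P δ) := by
        calc (Spath S P μ * star (Spath S P μ)) * (Spath S P δ * star (Spath S P δ))
            = (Spath S P μ * (star (Spath S P μ) * Spath S P δ)) * star (Spath S P δ) := by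
              simp only [mul_assoc]
          _ = Spath S P δ * star (Spath S P δ) := by rw [habs]
      have h22 : (Spath S P δ * star (Spath S P δ)) * (Spath S P μ * star (Spath S P μ))
          = Spath S P δ * star (Spath S P δ) := by
        have h21s := congrArg star h21
        rwa [star_mul, hPsel, hPsel] at h21s
      rw [h22]
      exact hPδ
    · have h0 := path_nonprefix hsa hidem horth hck1 hck2 hck3 μ δ hμlen hpre
      have hμδ : (Spath S P μ * star (Spath S P μ)) * (Spath S P δ * star (Spath S P δ)) = 0 := by
        calc (Spath S P μ * star (Spath S P μ)) * (Spath S P δ * star (Spath S P δ))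
            = (Spath S P μ * (star (Spath S P μ) * Spath S P δ)) * star (Spath S P δ) := by
              simp only [mul_assoc]
          _ = 0 := by rw [h0, mul_zero, zero_mul]
      have hδμ : (Spath S P δ * star (Spath S P δ)) * (Spath S P μ * star (Spath S P μ)) = 0 := by
        have hs := congrArg star hμδ
        rwa [star_mul, hPsel, hPsel, star_zero] at hs
      rw [hδμ, zero_mul]
end
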